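/- Let A = {0,1} and n0 ≥ 2. The sequences γ^{n0,1} and ρ^{n0,1} are σ_1-Gray cycles over {0,1}^{n0}. Moreover γ^{n0,1}_{[0]} = 0^{n0}, ρ^{n0,1}_{[0]} = 1·0^{n0−1}, γ^{n0,1}_{[2^{n0}−1]} = 0^{n0−1}·1, and ρ^{n0,1}_{[2^{n0}−1]} = 1·0^{n0−2}·1. -/

import Mathlib

/-- Hamming distance between two words (lists) of the same length:
the number of positions in which they differ. -/
def hammingL {α : Type*} [DecidableEq α] (w w' : List α) : ℕ :=
  ((w.zip w').filter fun q => decide (q.1 ≠ q.2)).length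

/-- `w` (restricted to indices `< N`) is a `σ_k`-Gray cycle over `X`:
its terms are pairwise distinct and enumerate `X` (a bijection from `[0, N-1]` onto `X`),
two consecutive terms have the same length and Hamming distance exactly `k`, and so do
the first and the last term. -/
def IsGrayCycleOn {α : Type*} [DecidableEq α] (k N : ℕ) (w : ℕ → List α)
    (X : Set (List α)) : Prop :=
  Set.BijOn w (Set.Iio N) X ∧
  (∀ i, 1 ≤ i → i < N →
    (w (i - 1)).length = (w i).length ∧ hammingL (w (i - 1)) (w i) = k) ∧
  (0 < N → (w (N - 1)).length = (w 0).length ∧ hammingL (w (N - 1)) (w 0) = k)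

/-- The bit complement `θ : 0 ↔ 1` on the binary alphabet `{0,1}`. -/
def cpl (x : Fin 2) : Fin 2 := x + 1

/-- The bit complement extended letterwise to binary words. -/
def cplW (w : List (Fin 2)) : List (Fin 2) := w.map cpl

/-- The reflected binary Gray code `g^{m,1}` over words of length `m`:
`g^{0,1} = (ε)` and `g^{m+1,1} = (0·g^{m,1}, 1·(g^{m,1})^R)`. -/
def binGray : ℕ → List (List (Fin 2))
  | 0 => [[]]
  | m + 1 =>
      (binGray m).map (fun w => 0 :: w) ++ (binGray m).reverse.map (fun w => 1 :: w)

/-- The sequence `γ^{n0,1}`: `γ^{n0,1}_{[0]} = g^{n0,1}_{[0]}` and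
`γ^{n0,1}_{[i]} = g^{n0,1}_{[2^{n0} - i]}` for `1 ≤ i ≤ 2^{n0} - 1`. -/
def gamma1 (n0 i : ℕ) : List (Fin 2) :=
  if i = 0 then (binGray n0).getD 0 [] else (binGray n0).getD (2 ^ n0 - i) []

/-- The sequence `ρ^{n0,1}`: `ρ^{n0,1}_{[0]} = g^{n0,1}_{[2^{n0}-1]}` and
`ρ^{n0,1}_{[i]} = g^{n0,1}_{[i-1]}` for `1 ≤ i ≤ 2^{n0} - 1`. -/
def rho1 (n0 i : ℕ) : List (Fin 2) :=
  if i = 0 then (binGray n0).getD (2 ^ n0 - 1) [] else (binGray n0).getD (i - 1) []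

/-- `grSeq n0 true t i` (resp. `grSeq n0 false t i`) is the term of index `i` of the
sequence `γ^{n0+2t, 2t+1}` (resp. `ρ^{n0+2t, 2t+1}`), built inductively: the base cases
are `γ^{n0,1}` and `ρ^{n0,1}`, and, writing `i = q·2^m + r` with `m = n0 + 2t` and
`r < 2^m`, `γ^{m+2, (2t+1)+2}_{[i]}` is `θ^r(00)·γ^{m,2t+1}_{[r]}`, `θ^r(01)·ρ^{m,2t+1}_{[r]}`,
`θ^r(11)·γ^{m,2t+1}_{[r]}`, `θ^r(10)·ρ^{m,2t+1}_{[r]}` according to `q = 0, 1, 2, 3`, and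
`ρ^{m+2, (2t+1)+2}_{[i]}` is `θ^r(10)·γ^{m,2t+1}_{[r]}`, `θ^r(11)·ρ^{m,2t+1}_{[r]}`,
`θ^r(01)·γ^{m,2t+1}_{[r]}`, `θ^r(00)·ρ^{m,2t+1}_{[r]}` according to `q = 0, 1, 2, 3`. -/
def grSeq (n0 : ℕ) : Bool → ℕ → ℕ → List (Fin 2)
  | b, 0, i => if b then gamma1 n0 i else rho1 n0 i
  | b, t + 1, i =>
      cplW^[i % 2 ^ (n0 + 2 * t)]
        (if b then
          (if i / 2 ^ (n0 + 2 * t) = 0 then [0, 0]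
           else if i / 2 ^ (n0 + 2 * t) = 1 then [0, 1]
           else if i / 2 ^ (n0 + 2 * t) = 2 then [1, 1] else [1, 0])
         else
          (if i / 2 ^ (n0 + 2 * t) = 0 then [1, 0]
           else if i / 2 ^ (n0 + 2 * t) = 1 then [1, 1]
           else if i / 2 ^ (n0 + 2 * t) = 2 then [0, 1] else [0, 0])) ++
        grSeq n0 (i / 2 ^ (n0 + 2 * t) % 2 == 0) t (i % 2 ^ (n0 + 2 * t))

/-- For odd `k` and `n ≥ k + 1`, `gammaNK n k i` is the term `γ^{n,k}_{[i]}`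
(here `n0 = n - k + 1` and `k = 2·(k/2) + 1`). -/
def gammaNK (n k i : ℕ) : List (Fin 2) := grSeq (n + 1 - k) true (k / 2) i

/-- For odd `k` and `n ≥ k + 1`, `rhoNK n k i` is the term `ρ^{n,k}_{[i]}`. -/
def rhoNK (n k i : ℕ) : List (Fin 2) := grSeq (n + 1 - k) false (k / 2) i

lemma binGray_length (m : ℕ) : (binGray m).length = 2 ^ m := by
  induction m with
  | zero => rfl
  | succ m ih => simp [binGray, ih, pow_succ]; ring

lemma mem_binGray_length {m : ℕ} {w : List (Fin 2)} (h : w ∈ binGray m) : w.length = m := by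
  induction m generalizing w with
  | zero => simp [binGray] at h; simp [h]
  | succ m ih =>
    simp only [binGray, List.mem_append, List.mem_map, List.mem_reverse] at h
    rcases h with ⟨u, hu, rfl⟩ | ⟨u, hu, rfl⟩ <;> simp [ih hu]

lemma mem_binGray_of_length {m : ℕ} {w : List (Fin 2)} (h : w.length = m) : w ∈ binGray m := by
  induction m generalizing w with
  | zero => simp [List.length_eq_zero_iff] at h; simp [binGray, h]
  | succ m ih =>
    match w with
    | a :: u =>
      simp at h
      simp only [binGray, List.mem_append, List.mem_map, List.mem_reverse]
      fin_cases a
      · exact Or.inl ⟨u, ih h, rfl⟩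
      · exact Or.inr ⟨u, ih h, rfl⟩

lemma binGray_nodup (m : ℕ) : (binGray m).Nodup := by
  induction m with
  | zero => simp [binGray]
  | succ m ih =>
    simp only [binGray]
    apply List.Nodup.append
    · exact ih.map (fun a b h => by simpa using h)
    · exact (List.nodup_reverse.mpr ih).map (fun a b h => by simpa using h)
    · intro x hx hy
      simp only [List.mem_map, List.mem_reverse] at hx hy
      obtain ⟨u, _, rfl⟩ := hx
      obtain ⟨v, _, hv⟩ := hy
      simp at hv

lemma hammingL_cons {α : Type*} [DecidableEq α] (a b : α) (u v : List α) :
    hammingL (a :: u) (b :: v) = (if a = b then 0 else 1) + hammingL u v := by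
  simp only [hammingL, List.zip_cons_cons, List.filter_cons]
  by_cases h : a = b <;> simp [h, Nat.add_comm]

lemma hammingL_self {α : Type*} [DecidableEq α] (u : List α) : hammingL u u = 0 := by
  induction u with
  | nil => rfl
  | cons a u ih => simp [hammingL_cons, ih]

lemma hammingL_comm {α : Type*} [DecidableEq α] (u v : List α) :
    hammingL u v = hammingL v u := by
  induction u generalizing v with
  | nil => cases v <;> rfl
  | cons a u ih =>
    cases v with
    | nil => rfl
    | cons b v =>
      rw [hammingL_cons, hammingL_cons, ih v]
      congr 1
      by_cases h : a = b
      · subst h; simp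
      · rw [if_neg h, if_neg (fun hh => h hh.symm)]

lemma binGray_getD_left {m i : ℕ} (h : i < 2 ^ m) :
    (binGray (m+1)).getD i [] = 0 :: (binGray m).getD i [] := by
  have h1 : i < ((binGray m).map (fun w => 0 :: w)).length := by simp [binGray_length, h]
  rw [binGray, List.getD_append _ _ _ _ h1, List.getD_eq_getElem _ _ h1, List.getElem_map,
    List.getD_eq_getElem _ _ (by simpa [binGray_length] using h)]

lemma binGray_getD_right {m i : ℕ} (h1 : 2 ^ m ≤ i) (h2 : i < 2 ^ (m+1)) :
    (binGray (m+1)).getD i [] = 1 :: (binGray m).getD (2 ^ (m+1) - 1 - i) [] := by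
  have hl : ((binGray m).map (fun w => (0:Fin 2) :: w)).length = 2 ^ m := by simp [binGray_length]
  have h2' : i - 2 ^ m < 2 ^ m := by
    have := pow_succ 2 m; omega
  have hlt : i - 2 ^ m < ((binGray m).reverse.map (fun w => (1:Fin 2) :: w)).length := by
    simp [binGray_length, h2']
  rw [binGray, List.getD_append_right _ _ _ _ (by omega), hl, List.getD_eq_getElem _ _ hlt,
    List.getElem_map, List.getElem_reverse]
  congr 1
  have e : (binGray m).length - 1 - (i - 2 ^ m) = 2 ^ (m+1) - 1 - i := by
    rw [binGray_length]; have := pow_succ 2 m; omega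
  rw [← e, List.getD_eq_getElem _ _ (by rw [binGray_length]; omega)]

lemma binGray_getD_length {m i : ℕ} (h : i < 2 ^ m) :
    ((binGray m).getD i []).length = m := by
  rw [List.getD_eq_getElem _ _ (by simpa [binGray_length] using h)]
  exact mem_binGray_length (List.getElem_mem _)

lemma binGray_adj (m : ℕ) : ∀ i, i + 1 < 2 ^ m →
    hammingL ((binGray m).getD i []) ((binGray m).getD (i+1) []) = 1 := by
  induction m with
  | zero => intro i h; omega
  | succ m ih =>
    intro i h
    have hp : (2:ℕ) ^ (m+1) = 2 * 2 ^ m := by rw [pow_succ]; ring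
    rcases lt_trichotomy (i + 1) (2 ^ m) with h1 | h1 | h1
    · rw [binGray_getD_left (by omega), binGray_getD_left h1, hammingL_cons, if_pos rfl,
        Nat.zero_add]
      exact ih i h1
    · have hi : i = 2 ^ m - 1 := by omega
      have hpos : 0 < 2 ^ m := Nat.pow_pos (by norm_num)
      rw [binGray_getD_left (by omega), binGray_getD_right (by omega) (by omega), hammingL_cons]
      have : 2 ^ (m+1) - 1 - (i+1) = i := by omega
      rw [this]
      simp [hammingL_self]
    · have hle : 2 ^ m ≤ i := by omega
      rw [binGray_getD_right hle (by omega), binGray_getD_right (by omega) (by omega),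
        hammingL_cons]
      have e1 : 2 ^ (m+1) - 1 - i = (2 ^ (m+1) - 1 - (i+1)) + 1 := by omega
      rw [e1, hammingL_comm, if_pos rfl, Nat.zero_add]
      exact ih _ (by omega)

lemma binGray_cyc (m : ℕ) (hm : 1 ≤ m) :
    hammingL ((binGray m).getD (2 ^ m - 1) []) ((binGray m).getD 0 []) = 1 := by
  obtain ⟨m, rfl⟩ := Nat.exists_eq_add_of_le hm
  have hpos : 0 < 2 ^ m := Nat.pow_pos (by norm_num)
  have hp : (2:ℕ) ^ (m+1) = 2 * 2 ^ m := by rw [pow_succ]; ring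
  rw [Nat.add_comm 1 m]
  rw [binGray_getD_right (by omega) (by omega), binGray_getD_left hpos, hammingL_cons]
  have : 2 ^ (m+1) - 1 - (2 ^ (m+1) - 1) = 0 := by omega
  rw [this]
  simp [hammingL_self]

lemma binGray_zero (m : ℕ) : (binGray m).getD 0 [] = List.replicate m 0 := by
  induction m with
  | zero => rfl
  | succ m ih =>
    rw [binGray_getD_left (Nat.pow_pos (by norm_num)), ih, List.replicate_succ]

lemma binGray_last (m : ℕ) (hm : 1 ≤ m) :
    (binGray m).getD (2 ^ m - 1) [] = 1 :: List.replicate (m - 1) 0 := by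
  obtain ⟨m, rfl⟩ := Nat.exists_eq_add_of_le hm
  have hpos : 0 < 2 ^ m := Nat.pow_pos (by norm_num)
  have hp : (2:ℕ) ^ (m+1) = 2 * 2 ^ m := by rw [pow_succ]; ring
  rw [Nat.add_comm 1 m, binGray_getD_right (by omega) (by omega)]
  have : 2 ^ (m+1) - 1 - (2 ^ (m+1) - 1) = 0 := by omega
  rw [this, binGray_zero]
  simp

lemma binGray_one (m : ℕ) (hm : 1 ≤ m) :
    (binGray m).getD 1 [] = List.replicate (m - 1) 0 ++ [1] := by
  obtain ⟨m, rfl⟩ := Nat.exists_eq_add_of_le hm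
  rw [Nat.add_comm 1 m]
  clear hm
  induction m with
  | zero => rfl
  | succ m ih =>
    have h1 : (1:ℕ) < 2 ^ (m+1) := by
      have := (Nat.pow_pos two_pos : 0 < 2 ^ m); have hp : (2:ℕ)^(m+1) = 2*2^m := by rw [pow_succ]; ring
      omega
    rw [binGray_getD_left h1, ih]
    simp [List.replicate_succ]

lemma binGray_penult (m : ℕ) (hm : 2 ≤ m) :
    (binGray m).getD (2 ^ m - 2) [] = 1 :: (List.replicate (m - 2) 0 ++ [1]) := by
  obtain ⟨m, rfl⟩ := Nat.exists_eq_add_of_le hm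
  have hm1 : 1 ≤ m + 1 := by omega
  have hpos : (2:ℕ) ≤ 2 ^ (m+1) := by
    calc (2:ℕ) = 2^1 := rfl
    _ ≤ 2 ^ (m+1) := Nat.pow_le_pow_right (by norm_num) (by omega)
  have hp : (2:ℕ) ^ (m+1+1) = 2 * 2 ^ (m+1) := by rw [pow_succ]; ring
  rw [Nat.add_comm 2 m, show m + 2 = (m+1) + 1 from rfl]
  rw [binGray_getD_right (by omega) (by omega)]
  have : 2 ^ (m+1+1) - 1 - (2 ^ (m+1+1) - 2) = 1 := by omega
  rw [this, binGray_one _ hm1]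
  simp


lemma binGray_getD_inj {m i j : ℕ} (hi : i < 2 ^ m) (hj : j < 2 ^ m)
    (h : (binGray m).getD i [] = (binGray m).getD j []) : i = j := by
  rw [List.getD_eq_getElem _ _ (by simpa [binGray_length] using hi),
      List.getD_eq_getElem _ _ (by simpa [binGray_length] using hj)] at h
  exact (List.Nodup.getElem_inj_iff (binGray_nodup m)).mp h

/-- For `n0 ≥ 2`, the sequences `γ^{n0,1}` and `ρ^{n0,1}` are `σ_1`-Gray cycles over
`{0,1}^{n0}`; moreover `γ^{n0,1}_{[0]} = 0^{n0}`, `ρ^{n0,1}_{[0]} = 1·0^{n0-1}`,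
`γ^{n0,1}_{[2^{n0}-1]} = 0^{n0-1}·1`, and `ρ^{n0,1}_{[2^{n0}-1]} = 1·0^{n0-2}·1`. -/
theorem statement4 (n0 : ℕ) (hn0 : 2 ≤ n0) :
    IsGrayCycleOn 1 (2 ^ n0) (gamma1 n0) {w : List (Fin 2) | w.length = n0} ∧
    IsGrayCycleOn 1 (2 ^ n0) (rho1 n0) {w : List (Fin 2) | w.length = n0} ∧
    gamma1 n0 0 = List.replicate n0 0 ∧
    rho1 n0 0 = 1 :: List.replicate (n0 - 1) 0 ∧
    gamma1 n0 (2 ^ n0 - 1) = List.replicate (n0 - 1) 0 ++ [1] ∧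
    rho1 n0 (2 ^ n0 - 1) = 1 :: (List.replicate (n0 - 2) 0 ++ [1]) := by
  have h2 : (2:ℕ) ≤ 2 ^ n0 := by
    calc (2:ℕ) = 2 ^ 1 := rfl
    _ ≤ 2 ^ n0 := Nat.pow_le_pow_right (by norm_num) (by omega)
  have hlen : ∀ i, i < 2 ^ n0 → ((binGray n0).getD i []).length = n0 :=
    fun i h => binGray_getD_length h
  have glen : ∀ i, i < 2 ^ n0 → (gamma1 n0 i).length = n0 := by
    intro i hi
    simp only [gamma1]
    split_ifs <;> exact hlen _ (by omega)
  have rlen : ∀ i, i < 2 ^ n0 → (rho1 n0 i).length = n0 := by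
    intro i hi
    simp only [rho1]
    split_ifs <;> exact hlen _ (by omega)
  refine ⟨⟨⟨?_, ?_, ?_⟩, ?_, ?_⟩, ⟨⟨?_, ?_, ?_⟩, ?_, ?_⟩, ?_, ?_, ?_, ?_⟩
  · -- gamma maps to
    intro i hi
    simp only [Set.mem_Iio] at hi
    exact glen i hi
  · -- gamma inj
    intro i hi j hj hij
    simp only [Set.mem_Iio] at hi hj
    simp only [gamma1] at hij
    split_ifs at hij <;> (have := binGray_getD_inj (by omega) (by omega) hij; omega)
  · -- gamma surj
    intro w hw
    simp only [Set.mem_setOf_eq] at hw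
    obtain ⟨j, hj, hjw⟩ := List.mem_iff_getElem.mp (mem_binGray_of_length hw)
    rw [binGray_length] at hj
    have hgetD : (binGray n0).getD j [] = w := by
      rw [List.getD_eq_getElem _ _ (by simpa [binGray_length] using hj)]
      exact hjw
    refine ⟨if j = 0 then 0 else 2 ^ n0 - j, by simp only [Set.mem_Iio]; split_ifs <;> omega, ?_⟩
    by_cases h : j = 0
    · subst h
      simpa [gamma1] using hgetD
    · rw [if_neg h]
      simp only [gamma1, if_neg (by omega : ¬ (2 ^ n0 - j = 0))]
      rw [show 2 ^ n0 - (2 ^ n0 - j) = j by omega, hgetD]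
  · -- gamma adjacency
    intro i h1 hi
    refine ⟨by rw [glen _ (by omega), glen _ hi], ?_⟩
    rcases eq_or_lt_of_le h1 with rfl | h1'
    · rw [show (1:ℕ) - 1 = 0 from rfl]
      simp only [gamma1, if_pos rfl, if_neg one_ne_zero]
      rw [hammingL_comm]
      exact binGray_cyc n0 (by omega)
    · simp only [gamma1, if_neg (by omega : ¬ (i - 1 = 0)), if_neg (by omega : ¬ (i = 0))]
      rw [show 2 ^ n0 - (i - 1) = (2 ^ n0 - i) + 1 by omega, hammingL_comm]
      exact binGray_adj n0 _ (by omega)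
  · -- gamma closing
    intro _
    refine ⟨by rw [glen _ (by omega), glen _ (by omega)], ?_⟩
    simp only [gamma1, if_neg (by omega : ¬ (2 ^ n0 - 1 = 0)), if_pos rfl]
    rw [show 2 ^ n0 - (2 ^ n0 - 1) = 1 by omega, hammingL_comm]
    exact binGray_adj n0 0 (by omega)
  · -- rho maps to
    intro i hi
    simp only [Set.mem_Iio] at hi
    exact rlen i hi
  · -- rho inj
    intro i hi j hj hij
    simp only [Set.mem_Iio] at hi hj
    simp only [rho1] at hij
    split_ifs at hij <;> (have := binGray_getD_inj (by omega) (by omega) hij; omega)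
  · -- rho surj
    intro w hw
    simp only [Set.mem_setOf_eq] at hw
    obtain ⟨j, hj, hjw⟩ := List.mem_iff_getElem.mp (mem_binGray_of_length hw)
    rw [binGray_length] at hj
    have hgetD : (binGray n0).getD j [] = w := by
      rw [List.getD_eq_getElem _ _ (by simpa [binGray_length] using hj)]
      exact hjw
    refine ⟨if j = 2 ^ n0 - 1 then 0 else j + 1,
      by simp only [Set.mem_Iio]; split_ifs <;> omega, ?_⟩
    by_cases h : j = 2 ^ n0 - 1
    · subst h
      simpa [rho1] using hgetD
    · rw [if_neg h]
      simp only [rho1, if_neg (by omega : ¬ (j + 1 = 0))]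
      rw [show j + 1 - 1 = j from rfl, hgetD]
  · -- rho adjacency
    intro i h1 hi
    refine ⟨by rw [rlen _ (by omega), rlen _ hi], ?_⟩
    rcases eq_or_lt_of_le h1 with rfl | h1'
    · rw [show (1:ℕ) - 1 = 0 from rfl]
      simp only [rho1, if_pos rfl, if_neg one_ne_zero]
      rw [show (1:ℕ) - 1 = 0 from rfl]
      exact binGray_cyc n0 (by omega)
    · simp only [rho1, if_neg (by omega : ¬ (i - 1 = 0)), if_neg (by omega : ¬ (i = 0))]
      rw [show i - 1 = (i - 1 - 1) + 1 by omega]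
      exact binGray_adj n0 _ (by omega)
  · -- rho closing
    intro _
    refine ⟨by rw [rlen _ (by omega), rlen _ (by omega)], ?_⟩
    simp only [rho1, if_neg (by omega : ¬ (2 ^ n0 - 1 = 0)), if_pos rfl]
    rw [show 2 ^ n0 - 1 = (2 ^ n0 - 1 - 1) + 1 by omega]
    exact binGray_adj n0 _ (by omega)
  · simp only [gamma1, if_pos rfl]
    exact binGray_zero n0
  · simp only [rho1, if_pos rfl]
    exact binGray_last n0 (by omega)
  · simp only [gamma1, if_neg (by omega : ¬ (2 ^ n0 - 1 = 0))]
    rw [show 2 ^ n0 - (2 ^ n0 - 1) = 1 by omega]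
    exact binGray_one n0 (by omega)
  · simp only [rho1, if_neg (by omega : ¬ (2 ^ n0 - 1 = 0))]
    rw [show 2 ^ n0 - 1 - 1 = 2 ^ n0 - 2 by omega]
    exact binGray_penult n0 hn0
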